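/- For any d ∈ ℕ and b ∈ (0,∞), the Dirichlet kernel satisfies the global bound max over (s,x) ∈ S_d × S_d of κ_{s,b}(x) ≤ ∏_{k=1}^d (1/b + k), where κ_{s,b} = K_{s/b+1, s_{d+1}/b+1}. -/

import Mathlib

open MeasureTheory Real Finset

/-- The `d`-dimensional probability simplex. -/
def Sd (d : ℕ) : Set (Fin d → ℝ) :=
  {s | (∀ i, 0 ≤ s i) ∧ ∑ i, s i ≤ 1}

/-- The Dirichlet density with parameters `α` and `β`. -/
noncomputable def Kd {d : ℕ} (α : Fin d → ℝ) (β : ℝ) (s : Fin d → ℝ) : ℝ :=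
  (Real.Gamma (∑ i, α i + β) / (Real.Gamma β * ∏ i, Real.Gamma (α i))) *
    (1 - ∑ i, s i) ^ (β - 1) * ∏ i, (s i) ^ (α i - 1)

/-- The Dirichlet kernel `κ_{s,b} = K_{s/b + 1, s_{d+1}/b + 1}`. -/
noncomputable def kap {d : ℕ} (s : Fin d → ℝ) (b : ℝ) : (Fin d → ℝ) → ℝ :=
  Kd (fun i => s i / b + 1) ((1 - ∑ i, s i) / b + 1)

theorem realBeta (a c : ℝ) (ha : 0 < a) (hc : 0 < c) :
    Real.Gamma a * Real.Gamma c =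
      Real.Gamma (a + c) * ∫ u in (0:ℝ)..1, u ^ (a - 1) * (1 - u) ^ (c - 1) := by
  have h := Complex.Gamma_mul_Gamma_eq_betaIntegral (s := a) (t := c) (by simpa using ha) (by simpa using hc)
  have hbeta : Complex.betaIntegral a c =
      ((∫ u in (0:ℝ)..1, u ^ (a - 1) * (1 - u) ^ (c - 1) : ℝ) : ℂ) := by
    rw [Complex.betaIntegral]
    rw [← intervalIntegral.integral_ofReal]
    refine intervalIntegral.integral_congr fun u hu => ?_
    rw [Set.uIcc_of_le (by norm_num)] at hu
    have h1 : ((u:ℂ)) ^ ((a:ℂ) - 1) = ((u ^ (a-1) : ℝ) : ℂ) := by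
      rw [show ((a:ℂ)-1) = ((a-1:ℝ):ℂ) by push_cast; ring, ← Complex.ofReal_cpow hu.1]
    have h2 : ((1:ℂ) - u) ^ ((c:ℂ) - 1) = (((1-u) ^ (c-1) : ℝ) : ℂ) := by
      rw [show ((1:ℂ) - (u:ℂ)) = ((1-u:ℝ):ℂ) by push_cast; ring,
          show ((c:ℂ)-1) = ((c-1:ℝ):ℂ) by push_cast; ring,
          ← Complex.ofReal_cpow (by linarith [hu.2])]
    rw [h1, h2, ← Complex.ofReal_mul]
  rw [hbeta] at h
  have := congrArg Complex.re h
  simpa [← Complex.ofReal_add, Complex.Gamma_ofReal, ← Complex.ofReal_mul] using this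

theorem twovar {x y : ℝ} (hx : 0 ≤ x) (hy : 0 ≤ y) :
    Real.Gamma (1 + x + y) * (x ^ x * y ^ y) ≤
      (x + y) ^ (x + y) * (Real.Gamma (1 + x) * Real.Gamma (1 + y)) := by
  rcases eq_or_lt_of_le hx with h0 | hx
  · rw [← h0]; simp [Real.Gamma_one, Real.rpow_zero]; rw [mul_comm]
  rcases eq_or_lt_of_le hy with h0 | hy
  · rw [← h0]; simp [Real.Gamma_one, Real.rpow_zero]; rw [mul_comm]
  set n := x + y with hn
  have hn0 : 0 < n := by positivity
  set p := x / n with hp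
  set q := y / n with hq
  have hp0 : 0 < p := by positivity
  have hq0 : 0 < q := by positivity
  have hpq : p + q = 1 := by rw [hp, hq, ← add_div, ← hn, div_self hn0.ne']
  have hp1 : p ≤ 1 := by nlinarith
  set I := ∫ u in (0:ℝ)..1, u ^ x * (1 - u) ^ y with hI
  -- beta identity
  have hB : Real.Gamma (1 + x) * Real.Gamma (1 + y) = (1 + n) * Real.Gamma (1 + n) * I := by
    have hB0 := realBeta (1 + x) (1 + y) (by linarith) (by linarith)
    have h2 : Real.Gamma (1 + x + (1 + y)) = (1 + n) * Real.Gamma (1 + n) := by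
      rw [show (1 + x + (1 + y)) = (1 + n) + 1 by rw [hn]; ring]
      exact Real.Gamma_add_one (by positivity)
    rw [h2] at hB0
    rw [hB0, hI]
    norm_num
  -- continuity of integrands
  have hf : Continuous fun u : ℝ => u ^ x * (1 - u) ^ y :=
    (Real.continuous_rpow_const hx.le).mul
      ((Real.continuous_rpow_const hy.le).comp (continuous_const.sub continuous_id))
  have htent1 : Continuous fun u : ℝ => p ^ x * q ^ y * (u / p) ^ n :=
    continuous_const.mul ((Real.continuous_rpow_const hn0.le).comp
      (continuous_id.div_const p))
  have htent2 : Continuous fun u : ℝ => p ^ x * q ^ y * ((1 - u) / q) ^ n :=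
    continuous_const.mul ((Real.continuous_rpow_const hn0.le).comp
      ((continuous_const.sub continuous_id).div_const q))
  -- pointwise bounds
  have hpt1 : ∀ u ∈ Set.Icc (0:ℝ) p, p ^ x * q ^ y * (u / p) ^ n ≤ u ^ x * (1 - u) ^ y := by
    intro u hu
    obtain ⟨hu0, hup⟩ := hu
    have hdiv0 : 0 ≤ u / p := by positivity
    rw [hn, Real.rpow_add' hdiv0 (by positivity)]
    have e1 : p ^ x * (u / p) ^ x = u ^ x := by
      rw [← Real.mul_rpow hp0.le hdiv0, mul_div_cancel₀ _ hp0.ne']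
    have e2 : q ^ y * (u / p) ^ y ≤ (1 - u) ^ y := by
      rw [← Real.mul_rpow hq0.le hdiv0]
      apply Real.rpow_le_rpow (by positivity) _ hy.le
      have h1 : u / p ≤ 1 := div_le_one_of_le₀ hup hp0.le
      nlinarith
    calc p ^ x * q ^ y * ((u / p) ^ x * (u / p) ^ y)
        = (p ^ x * (u / p) ^ x) * (q ^ y * (u / p) ^ y) := by ring
      _ ≤ u ^ x * (1 - u) ^ y := by
          rw [e1]
          exact mul_le_mul_of_nonneg_left e2 (by positivity)
  have hpt2 : ∀ u ∈ Set.Icc p 1, p ^ x * q ^ y * ((1 - u) / q) ^ n ≤ u ^ x * (1 - u) ^ y := by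
    intro u hu
    obtain ⟨hup, hu1⟩ := hu
    have h1u : 0 ≤ 1 - u := by linarith
    have hdiv0 : 0 ≤ (1 - u) / q := by positivity
    rw [hn, Real.rpow_add' hdiv0 (by positivity)]
    have e1 : q ^ y * ((1 - u) / q) ^ y = (1 - u) ^ y := by
      rw [← Real.mul_rpow hq0.le hdiv0, mul_div_cancel₀ _ hq0.ne']
    have e2 : p ^ x * ((1 - u) / q) ^ x ≤ u ^ x := by
      rw [← Real.mul_rpow hp0.le hdiv0]
      apply Real.rpow_le_rpow (by positivity) _ hx.le
      have h1 : (1 - u) / q ≤ 1 := by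
        rw [div_le_one hq0]; nlinarith
      nlinarith
    calc p ^ x * q ^ y * (((1 - u) / q) ^ x * ((1 - u) / q) ^ y)
        = (p ^ x * ((1 - u) / q) ^ x) * (q ^ y * ((1 - u) / q) ^ y) := by ring
      _ ≤ u ^ x * (1 - u) ^ y := by
          rw [e1]
          exact mul_le_mul_of_nonneg_right e2 (by positivity)
  -- integral computations
  have hint1 : (∫ u in (0:ℝ)..p, p ^ x * q ^ y * (u / p) ^ n)
      = p ^ x * q ^ y * (p / (n + 1)) := by
    rw [intervalIntegral.integral_const_mul]
    congr 1
    rw [intervalIntegral.integral_comp_div (fun v => v ^ n) hp0.ne']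
    simp only [zero_div, div_self hp0.ne']
    rw [integral_rpow (Or.inl (by linarith))]
    rw [Real.one_rpow, Real.zero_rpow (by positivity), smul_eq_mul]
    field_simp
    norm_num
  have hint2 : (∫ u in p..(1:ℝ), p ^ x * q ^ y * ((1 - u) / q) ^ n)
      = p ^ x * q ^ y * (q / (n + 1)) := by
    rw [intervalIntegral.integral_const_mul]
    congr 1
    have := intervalIntegral.integral_comp_sub_left (a := p) (b := 1) (fun v : ℝ => (v / q) ^ n) 1
    rw [this]
    rw [show (1:ℝ) - 1 = 0 by ring, show (1:ℝ) - p = q by linarith]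
    rw [intervalIntegral.integral_comp_div (fun v => v ^ n) hq0.ne']
    simp only [zero_div, div_self hq0.ne']
    rw [integral_rpow (Or.inl (by linarith))]
    rw [Real.one_rpow, Real.zero_rpow (by positivity), smul_eq_mul]
    field_simp
    norm_num
  -- lower bound for I
  have hIlb : p ^ x * q ^ y / (n + 1) ≤ I := by
    have hsplit : I = (∫ u in (0:ℝ)..p, u ^ x * (1 - u) ^ y)
        + ∫ u in p..(1:ℝ), u ^ x * (1 - u) ^ y := by
      rw [hI, intervalIntegral.integral_add_adjacent_intervals
        (hf.intervalIntegrable 0 p) (hf.intervalIntegrable p 1)]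
    have hm1 : (∫ u in (0:ℝ)..p, p ^ x * q ^ y * (u / p) ^ n)
        ≤ ∫ u in (0:ℝ)..p, u ^ x * (1 - u) ^ y :=
      intervalIntegral.integral_mono_on hp0.le (htent1.intervalIntegrable 0 p)
        (hf.intervalIntegrable 0 p) hpt1
    have hm2 : (∫ u in p..(1:ℝ), p ^ x * q ^ y * ((1 - u) / q) ^ n)
        ≤ ∫ u in p..(1:ℝ), u ^ x * (1 - u) ^ y :=
      intervalIntegral.integral_mono_on hp1 (htent2.intervalIntegrable p 1)
        (hf.intervalIntegrable p 1) hpt2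
    rw [hint1] at hm1
    rw [hint2] at hm2
    rw [hsplit]
    calc p ^ x * q ^ y / (n + 1)
        = p ^ x * q ^ y * (p / (n + 1)) + p ^ x * q ^ y * (q / (n + 1)) := by
          rw [← mul_add, ← add_div, hpq, mul_one_div]
      _ ≤ _ := add_le_add hm1 hm2
  -- final computation
  have hkey : x ^ x * y ^ y = n ^ n * (p ^ x * q ^ y) := by
    rw [hn, Real.rpow_add' hn0.le (by positivity), hp, hq,
      Real.div_rpow hx.le hn0.le, Real.div_rpow hy.le hn0.le]
    field_simp
  rw [show (1 : ℝ) + x + y = 1 + n by rw [hn]; ring, hB, hkey]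
  have hG : 0 < Real.Gamma (1 + n) := Real.Gamma_pos_of_pos (by linarith)
  calc Real.Gamma (1 + n) * (n ^ n * (p ^ x * q ^ y))
      = n ^ n * (Real.Gamma (1 + n) * ((1 + n) * (p ^ x * q ^ y / (n + 1)))) := by
        field_simp; ring
    _ ≤ n ^ n * (Real.Gamma (1 + n) * ((1 + n) * I)) := by
        apply mul_le_mul_of_nonneg_left _ (by positivity)
        apply mul_le_mul_of_nonneg_left _ hG.le
        exact mul_le_mul_of_nonneg_left hIlb (by linarith)
    _ = n ^ n * ((1 + n) * Real.Gamma (1 + n) * I) := by ring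

theorem self_rpow_pos {y : ℝ} (hy : 0 ≤ y) : 0 < y ^ y := by
  rcases eq_or_lt_of_le hy with h | h
  · rw [← h, Real.rpow_zero]; norm_num
  · exact Real.rpow_pos_of_pos h y

theorem gibbs_term {c t x : ℝ} (hc : 0 < c) (ht : 0 ≤ t) (hx : 0 ≤ x) :
    x ^ t ≤ (t / c) ^ t * Real.exp (c * x - t) := by
  rcases eq_or_lt_of_le ht with h | htpos
  · rw [← h]
    simp only [Real.rpow_zero, one_mul, sub_zero]
    exact Real.one_le_exp (by positivity)
  rcases eq_or_lt_of_le hx with h | hxpos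
  · rw [← h, Real.zero_rpow htpos.ne']
    positivity
  have key : x ^ t = (t / c) ^ t * (x * c / t) ^ t := by
    rw [← Real.mul_rpow (by positivity) (by positivity)]
    congr 1
    field_simp
  rw [key]
  apply mul_le_mul_of_nonneg_left _ (by positivity)
  have h1 : x * c / t ≤ Real.exp (x * c / t - 1) := by
    have := Real.add_one_le_exp (x * c / t - 1)
    linarith
  calc (x * c / t) ^ t ≤ (Real.exp (x * c / t - 1)) ^ t :=
        Real.rpow_le_rpow (by positivity) h1 ht
    _ = Real.exp (c * x - t) := by
        rw [← Real.exp_one_rpow (x * c / t - 1),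
          ← Real.rpow_mul (Real.exp_pos 1).le, Real.exp_one_rpow]
        congr 1
        field_simp

theorem superadd : ∀ (n : ℕ) (t : Fin n → ℝ), (∀ i, 0 ≤ t i) →
    Real.Gamma (1 + ∑ i, t i) * ∏ i, (t i) ^ (t i) ≤
      (∑ i, t i) ^ (∑ i, t i) * ∏ i, Real.Gamma (1 + t i) := by
  intro n
  induction n with
  | zero => intro t _; simp [Real.Gamma_one]
  | succ n ih =>
    intro t ht
    set x := t 0 with hx
    set y := ∑ i : Fin n, t i.succ with hy
    have hx0 : 0 ≤ x := ht 0
    have hy0 : 0 ≤ y := Finset.sum_nonneg fun i _ => ht i.succ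
    have hIH := ih (fun i => t i.succ) (fun i => ht i.succ)
    have htv := twovar hx0 hy0
    rw [Fin.sum_univ_succ, Fin.prod_univ_succ, Fin.prod_univ_succ]
    have hA : 0 < y ^ y * Real.Gamma (1 + y) :=
      mul_pos (self_rpow_pos hy0) (Real.Gamma_pos_of_pos (by linarith))
    rw [← mul_le_mul_iff_of_pos_right hA]
    have hprodnn : 0 ≤ ∏ i : Fin n, (t i.succ) ^ (t i.succ) :=
      Finset.prod_nonneg fun i _ => Real.rpow_nonneg (ht i.succ) _
    have hGnn : 0 ≤ ∏ i : Fin n, Real.Gamma (1 + t i.succ) :=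
      Finset.prod_nonneg fun i _ => (Real.Gamma_pos_of_pos (by linarith [ht i.succ])).le
    calc Real.Gamma (1 + (x + y)) * (x ^ x * ∏ i : Fin n, (t i.succ) ^ (t i.succ))
          * (y ^ y * Real.Gamma (1 + y))
        = (Real.Gamma (1 + x + y) * (x ^ x * y ^ y))
            * (Real.Gamma (1 + y) * ∏ i : Fin n, (t i.succ) ^ (t i.succ)) := by ring_nf
      _ ≤ ((x + y) ^ (x + y) * (Real.Gamma (1 + x) * Real.Gamma (1 + y)))
            * (y ^ y * ∏ i : Fin n, Real.Gamma (1 + t i.succ)) := by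
          apply mul_le_mul htv hIH _ (by positivity)
          exact mul_nonneg (Real.Gamma_pos_of_pos (by linarith)).le hprodnn
      _ = (x + y) ^ (x + y) * (Real.Gamma (1 + x) * ∏ i : Fin n, Real.Gamma (1 + t i.succ))
            * (y ^ y * Real.Gamma (1 + y)) := by ring

theorem gibbs {n : ℕ} {t x : Fin n → ℝ} {c : ℝ} (hc : 0 < c) (ht : ∀ i, 0 ≤ t i)
    (hx : ∀ i, 0 ≤ x i) (hsx : ∑ i, x i ≤ 1) (hst : ∑ i, t i = c) :
    ∏ i, (x i) ^ (t i) ≤ ∏ i, (t i / c) ^ (t i) := by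
  have h1 : ∑ i, (c * x i - t i) ≤ 0 := by
    rw [Finset.sum_sub_distrib, ← Finset.mul_sum, hst]
    nlinarith
  calc ∏ i, (x i) ^ (t i)
      ≤ ∏ i, ((t i / c) ^ (t i) * Real.exp (c * x i - t i)) :=
        Finset.prod_le_prod (fun i _ => Real.rpow_nonneg (hx i) _)
          (fun i _ => gibbs_term hc (ht i) (hx i))
    _ = (∏ i, (t i / c) ^ (t i)) * Real.exp (∑ i, (c * x i - t i)) := by
        rw [Finset.prod_mul_distrib, Real.exp_sum]
    _ ≤ (∏ i, (t i / c) ^ (t i)) * 1 := by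
        apply mul_le_mul_of_nonneg_left (Real.exp_le_one_iff.mpr h1)
        exact Finset.prod_nonneg fun i _ => Real.rpow_nonneg (div_nonneg (ht i) hc.le) _
    _ = ∏ i, (t i / c) ^ (t i) := mul_one _

theorem combo {n : ℕ} {t : Fin n → ℝ} {c : ℝ} (hc : 0 < c) (ht : ∀ i, 0 ≤ t i)
    (hst : ∑ i, t i = c) :
    Real.Gamma (1 + c) * ∏ i, (t i / c) ^ (t i) ≤ ∏ i, Real.Gamma (1 + t i) := by
  have hs := superadd n t ht
  rw [hst] at hs
  have hd : ∏ i, (t i / c) ^ (t i) = (∏ i, (t i) ^ (t i)) * (c⁻¹) ^ c := by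
    have : ∀ i : Fin n, (t i / c) ^ (t i) = (t i) ^ (t i) * (c⁻¹) ^ (t i) := by
      intro i
      rw [div_eq_mul_inv, Real.mul_rpow (ht i) (by positivity)]
    rw [Finset.prod_congr rfl fun i _ => this i, Finset.prod_mul_distrib,
      ← Real.rpow_sum_of_pos (by positivity) t Finset.univ, hst]
  have hcc : c ^ c * (c⁻¹) ^ c = 1 := by
    rw [← Real.mul_rpow hc.le (by positivity), mul_inv_cancel₀ hc.ne', Real.one_rpow]
  calc Real.Gamma (1 + c) * ∏ i, (t i / c) ^ (t i)
      = (Real.Gamma (1 + c) * ∏ i, (t i) ^ (t i)) * (c⁻¹) ^ c := by rw [hd]; ring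
    _ ≤ (c ^ c * ∏ i, Real.Gamma (1 + t i)) * (c⁻¹) ^ c := by
        apply mul_le_mul_of_nonneg_right hs (by positivity)
    _ = (∏ i, Real.Gamma (1 + t i)) * (c ^ c * (c⁻¹) ^ c) := by ring
    _ = ∏ i, Real.Gamma (1 + t i) := by rw [hcc, mul_one]

theorem gammaprod {c : ℝ} (hc : 0 < c) (d : ℕ) :
    Real.Gamma (c + d + 1) = Real.Gamma (c + 1) * ∏ k ∈ Finset.range d, (c + (k + 1)) := by
  induction d with
  | zero => simp
  | succ d ih =>
    have h : (c + ((d : ℕ) + 1 : ℕ) + 1 : ℝ) = (c + d + 1) + 1 := by push_cast; ring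
    rw [h, Real.Gamma_add_one (by positivity), ih, Finset.prod_range_succ]
    ring

/-- Global bound on the Dirichlet kernel:
`κ_{s,b}(x) ≤ ∏_{k=1}^d (1/b + k)` for all `s, x ∈ S_d`. -/
theorem stmt5 (d : ℕ) (b : ℝ) (hb : 0 < b) :
    ∀ s ∈ Sd d, ∀ x ∈ Sd d,
      kap s b x ≤ ∏ k ∈ Finset.range d, (1 / b + (k + 1)) := by
  intro s hs x hx
  obtain ⟨hs0, hs1⟩ := hs
  obtain ⟨hx0, hx1⟩ := hx
  set c : ℝ := 1 / b with hcdef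
  have hc : 0 < c := by positivity
  set t : Fin (d + 1) → ℝ := Fin.cons ((1 - ∑ i, s i) / b) (fun i => s i / b) with htdef
  set X : Fin (d + 1) → ℝ := Fin.cons (1 - ∑ i, x i) x with hXdef
  have ht : ∀ i, 0 ≤ t i := by
    refine Fin.cases ?_ ?_
    · rw [htdef, Fin.cons_zero]
      have : 0 ≤ 1 - ∑ i, s i := by linarith
      positivity
    · intro i
      rw [htdef, Fin.cons_succ]
      have := hs0 i
      positivity
  have hX : ∀ i, 0 ≤ X i := by
    refine Fin.cases ?_ ?_
    · rw [hXdef, Fin.cons_zero]; linarith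
    · intro i; rw [hXdef, Fin.cons_succ]; exact hx0 i
  have hsX : ∑ i, X i ≤ 1 := by
    rw [hXdef, Fin.sum_cons]; ring_nf; exact le_refl 1
  have hst : ∑ i, t i = c := by
    rw [htdef, Fin.sum_cons, hcdef, ← Finset.sum_div, ← add_div]
    ring_nf
  -- the pieces
  have e1 : ∑ i, (s i / b + 1) + ((1 - ∑ i, s i) / b + 1) = c + d + 1 := by
    rw [Finset.sum_add_distrib, Finset.sum_const, Finset.card_univ, Fintype.card_fin,
      ← Finset.sum_div, hcdef]
    push_cast
    field_simp
    ring
  have e2 : Real.Gamma ((1 - ∑ i, s i) / b + 1) * ∏ i, Real.Gamma (s i / b + 1)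
      = ∏ i, Real.Gamma (1 + t i) := by
    rw [Fin.prod_univ_succ, htdef]
    simp only [Fin.cons_zero, Fin.cons_succ]
    congr 1
    · rw [add_comm]
    · exact Finset.prod_congr rfl fun i _ => by rw [add_comm]
  have e3 : (1 - ∑ i, x i) ^ ((1 - ∑ i, s i) / b + 1 - 1) * ∏ i, (x i) ^ (s i / b + 1 - 1)
      = ∏ i, (X i) ^ (t i) := by
    rw [Fin.prod_univ_succ, htdef, hXdef]
    simp only [Fin.cons_zero, Fin.cons_succ, add_sub_cancel_right]
  have hG : 0 < ∏ i, Real.Gamma (1 + t i) :=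
    Finset.prod_pos fun i _ => Real.Gamma_pos_of_pos (by linarith [ht i])
  have hGA : Real.Gamma (1 + c) * ∏ i, (X i) ^ (t i) ≤ ∏ i, Real.Gamma (1 + t i) := by
    calc Real.Gamma (1 + c) * ∏ i, (X i) ^ (t i)
        ≤ Real.Gamma (1 + c) * ∏ i, (t i / c) ^ (t i) :=
          mul_le_mul_of_nonneg_left (gibbs hc ht hX hsX hst)
            (Real.Gamma_pos_of_pos (by linarith)).le
      _ ≤ ∏ i, Real.Gamma (1 + t i) := combo hc ht hst
  have hPnn : (0:ℝ) ≤ ∏ k ∈ Finset.range d, (c + (k + 1)) :=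
    Finset.prod_nonneg fun k _ => by positivity
  show Kd (fun i => s i / b + 1) ((1 - ∑ i, s i) / b + 1) x ≤ _
  rw [Kd]
  rw [e1, e2, mul_assoc, e3, div_mul_eq_mul_div, div_le_iff₀ hG]
  calc Real.Gamma (c + d + 1) * ∏ i, (X i) ^ (t i)
      = (∏ k ∈ Finset.range d, (c + (k + 1))) * (Real.Gamma (1 + c) * ∏ i, (X i) ^ (t i)) := by
        rw [gammaprod hc d, add_comm c 1]; ring
    _ ≤ (∏ k ∈ Finset.range d, (c + (k + 1))) * ∏ i, Real.Gamma (1 + t i) :=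
        mul_le_mul_of_nonneg_left hGA hPnn
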